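/- For α, β ∈ Sym²(F), the commutator of the Fock-space operators satisfies [ρ(ᾱ), ρ(β)] = E_{F̄}(ᾱ)E_F(β) + (1/2)·trace_{F̄}(E_{F̄}(ᾱ)E_F(β)), where E_{F̄}(ᾱ)E_F(β) ∈ End(F̄) acts as a derivation on F(H,F) ≅ Sym_•(F̄). -/

import Mathlib

private lemma pair_comm' {M : Type*} [AddCommGroup M] [Module ℂ M]
    (X Y : Module.End ℂ M) (t : ℂ) (h : X * Y - Y * X = t • 1) :
    (X*X) * (Y*Y) - (Y*Y) * (X*X)
      = (4*t) • (Y*X) + (2*t^2) • (1 : Module.End ℂ M) := by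
  have hXY : X * Y = t • 1 + Y * X := eq_add_of_sub_eq h
  have key : (X*X)*(Y*Y) - (Y*Y)*(X*X)
      = X*((X*Y - Y*X)*Y + Y*(X*Y - Y*X)) + ((X*Y - Y*X)*Y + Y*(X*Y - Y*X))*X := by
    noncomm_ring
  rw [h] at key
  rw [key]
  simp only [smul_mul_assoc, mul_smul_comm, one_mul, mul_one, mul_add, add_mul, smul_add]
  rw [hXY]
  simp only [smul_add, smul_smul]
  module

private lemma annih' {H M : Type*} [AddCommGroup H] [Module ℂ H] [AddCommGroup M] [Module ℂ M]
    (B : LinearMap.BilinForm ℂ H) (ρ : H →ₗ[ℂ] Module.End ℂ M)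
    (hheis : ∀ a b : H, ρ a * ρ b - ρ b * ρ a = (B a b) • (1 : Module.End ℂ M))
    (v₀ : M) (b : H) (hb0 : ρ b v₀ = 0) :
    ∀ l : List H, ρ b (((l.map ρ).prod) v₀)
      = ∑ k : Fin l.length, B b (l.get k) • ((((l.eraseIdx k)).map ρ).prod v₀)
  | [] => by simp [hb0]
  | x :: l => by
    have hcomm : ρ b * ρ x = (B b x) • 1 + ρ x * ρ b := eq_add_of_sub_eq (hheis b x)
    have ih := annih' B ρ hheis v₀ b hb0 l
    calc ρ b ((((x :: l).map ρ).prod) v₀)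
        = (ρ b * ρ x) (((l.map ρ).prod) v₀) := by
          simp [Module.End.mul_apply]
      _ = B b x • ((l.map ρ).prod) v₀ + ρ x (ρ b (((l.map ρ).prod) v₀)) := by
          rw [hcomm]; simp [Module.End.mul_apply]
      _ = B b x • ((l.map ρ).prod) v₀
          + ∑ k : Fin l.length, B b (l.get k) • (ρ x ((((l.eraseIdx k)).map ρ).prod v₀)) := by
          rw [ih, map_sum]; simp [map_smul]
      _ = ∑ k : Fin (x :: l).length,
            B b ((x :: l).get k) • ((((x :: l).eraseIdx k)).map ρ).prod v₀ := by
          simp only [List.length_cons, Fin.sum_univ_succ, List.get, List.eraseIdx_cons_zero,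
            List.eraseIdx_cons_succ, List.map_cons, List.prod_cons, Module.End.mul_apply]
          rfl

private lemma insert_comm_prod' {H M : Type*} [AddCommGroup H] [Module ℂ H] [AddCommGroup M]
    [Module ℂ M] (ρ : H →ₗ[ℂ] Module.End ℂ M) :
    ∀ (l : List H) (k : ℕ), k < l.length → ∀ v : H,
      (∀ x ∈ l, ρ v * ρ x = ρ x * ρ v) →
      ρ v * ((l.eraseIdx k).map ρ).prod = ((l.set k v).map ρ).prod
  | [], k, hk => by simp at hk
  | x :: l, 0, hk => by intro v hcomm; simp
  | x :: l, (k+1), hk => by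
    intro v hcomm
    have ih := insert_comm_prod' ρ l k (by simpa using hk) v
      (fun y hy => hcomm y (List.mem_cons_of_mem _ hy))
    simp only [List.eraseIdx_cons_succ, List.set, List.map_cons, List.prod_cons, ← mul_assoc,
      hcomm x List.mem_cons_self]
    rw [mul_assoc, ih]

private lemma set_linear' {H M : Type*} [AddCommGroup H] [Module ℂ H] [AddCommGroup M]
    [Module ℂ M] (ρ : H →ₗ[ℂ] Module.End ℂ M) (v₀ : M) :
    ∀ (l : List H) (k : ℕ), k < l.length →
      ∃ ψ : H →ₗ[ℂ] M, ∀ v, ψ v = (((l.set k v).map ρ).prod) v₀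
  | [], k, hk => by simp at hk
  | x :: l, 0, hk =>
    ⟨(LinearMap.applyₗ (((l.map ρ).prod) v₀)).comp ρ, fun v => by simp⟩
  | x :: l, (k+1), hk => by
    obtain ⟨ψ, hψ⟩ := set_linear' ρ v₀ l k (by simpa using hk)
    exact ⟨(ρ x).comp ψ, fun v => by simp [hψ, Module.End.mul_apply]⟩



/-- For `α, β ∈ Sym²(F)` (written as `α = Σᵢ cᵢ aᵢ⊗aᵢ`,
`β = Σⱼ dⱼ bⱼ⊗bⱼ` with `aᵢ, bⱼ ∈ F`), the commutator of the Fock-space operators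
satisfies `[ρ(ᾱ), ρ(β)] = E_{F̄}(ᾱ)E_F(β) + (1/2)·trace_{F̄}(E_{F̄}(ᾱ)E_F(β))`,
where `E_{F̄}(ᾱ)E_F(β) ∈ End(F̄)` acts as a derivation on `F(H,F) ≅ Sym_•(F̄)`. -/
theorem fock_sym2_commutator {H M : Type*} [AddCommGroup H] [Module ℂ H]
    [FiniteDimensional ℂ H] [AddCommGroup M] [Module ℂ M]
    (σ : H → H) (hσadd : ∀ x y : H, σ (x + y) = σ x + σ y)
    (hσsmul : ∀ (c : ℂ) (x : H), σ (c • x) = (starRingEnd ℂ c) • σ x)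
    (hσinv : ∀ x : H, σ (σ x) = x)
    (B : LinearMap.BilinForm ℂ H) (hskew : ∀ x y : H, B x y = - B y x)
    (hnd : B.Nondegenerate)
    (hreal : ∀ x y : H, B (σ x) (σ y) = starRingEnd ℂ (B x y))
    (F : Submodule ℂ H) (hFiso : ∀ a ∈ F, ∀ b ∈ F, B a b = 0)
    (hpos : ∀ a ∈ F, a ≠ 0 →
      0 < (Complex.I * B a (σ a)).re ∧ (Complex.I * B a (σ a)).im = 0)
    (ρ : H →ₗ[ℂ] Module.End ℂ M)
    (hheis : ∀ a b : H, ρ a * ρ b - ρ b * ρ a = (B a b) • (1 : Module.End ℂ M))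
    (v₀ : M) (hvac : ∀ a ∈ F, ρ a v₀ = 0)
    -- α = Σᵢ cᵢ aᵢ⊗aᵢ and β = Σⱼ dⱼ bⱼ⊗bⱼ, elements of Sym²(F);
    {n m : ℕ} (a : Fin n → H) (ha : ∀ i, a i ∈ F) (c : Fin n → ℂ)
    (b : Fin m → H) (hb : ∀ j, b j ∈ F) (d : Fin m → ℂ)
    -- the endomorphism E_{F̄}(ᾱ)E_F(β) of H (it maps F̄ to F̄)
    (D : Module.End ℂ H)
    (hD : ∀ x : H, D x = ∑ i : Fin n, ∑ j : Fin m,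
      ((4 : ℂ) * starRingEnd ℂ (c i) * d j * B (σ (a i)) (b j) * B (b j) x) • σ (a i)) :
    ∀ l : List H, (∀ x ∈ l, ∃ y ∈ F, x = σ y) →
      -- [ρ(ᾱ), ρ(β)] applied to the monomial x̄₁⋯x̄ₖ v₀ …
      ((∑ i : Fin n, (starRingEnd ℂ (c i)) • (ρ (σ (a i)) * ρ (σ (a i)))) *
        (∑ j : Fin m, (d j) • (ρ (b j) * ρ (b j)))
       - (∑ j : Fin m, (d j) • (ρ (b j) * ρ (b j))) *
        (∑ i : Fin n, (starRingEnd ℂ (c i)) • (ρ (σ (a i)) * ρ (σ (a i)))))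
        (((l.map ρ).prod) v₀)
      -- … equals the derivation induced by E_{F̄}(ᾱ)E_F(β) plus (1/2) its trace on F̄
      = (∑ i : Fin l.length, (((l.set i.1 (D (l.get i))).map ρ).prod) v₀)
        + (((1 / 2 : ℂ) * ∑ i : Fin n, ∑ j : Fin m,
              (4 : ℂ) * starRingEnd ℂ (c i) * d j
                * B (σ (a i)) (b j) * B (b j) (σ (a i)))
            • ((l.map ρ).prod) v₀) := by
  intro l hl
  have hb0 : ∀ j : Fin m, ρ (b j) v₀ = 0 := fun j => hvac _ (hb j)
  have hBbar : ∀ x ∈ F, ∀ y ∈ F, B (σ x) (σ y) = 0 := fun x hx y hy => by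
    rw [hreal, hFiso x hx y hy, map_zero]
  have hXcomm : ∀ (i : Fin n), ∀ x ∈ l, ρ (σ (a i)) * ρ x = ρ x * ρ (σ (a i)) := by
    intro i x hx
    obtain ⟨y, hy, rfl⟩ := hl x hx
    have h1 := hheis (σ (a i)) (σ y)
    rw [hBbar _ (ha i) _ hy, zero_smul] at h1
    exact sub_eq_zero.mp h1
  -- operator identity
  have hop : (∑ i : Fin n, (starRingEnd ℂ (c i)) • (ρ (σ (a i)) * ρ (σ (a i)))) *
        (∑ j : Fin m, (d j) • (ρ (b j) * ρ (b j)))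
       - (∑ j : Fin m, (d j) • (ρ (b j) * ρ (b j))) *
        (∑ i : Fin n, (starRingEnd ℂ (c i)) • (ρ (σ (a i)) * ρ (σ (a i))))
      = ∑ i : Fin n, ∑ j : Fin m, (starRingEnd ℂ (c i) * d j) •
          ((4 * B (σ (a i)) (b j)) • (ρ (b j) * ρ (σ (a i)))
            + (2 * (B (σ (a i)) (b j))^2) • (1 : Module.End ℂ M)) := by
    have swap : (∑ j : Fin m, ∑ i : Fin n,
        ((d j) • (ρ (b j) * ρ (b j))) * ((starRingEnd ℂ (c i)) • (ρ (σ (a i)) * ρ (σ (a i)))))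
        = ∑ i : Fin n, ∑ j : Fin m,
        ((d j) • (ρ (b j) * ρ (b j))) * ((starRingEnd ℂ (c i)) • (ρ (σ (a i)) * ρ (σ (a i)))) :=
      by rw [Finset.sum_comm]
    rw [Finset.sum_mul_sum, Finset.sum_mul_sum, swap, ← Finset.sum_sub_distrib]
    refine Finset.sum_congr rfl fun i _ => ?_
    rw [← Finset.sum_sub_distrib]
    refine Finset.sum_congr rfl fun j _ => ?_
    have hpc := pair_comm' (ρ (σ (a i))) (ρ (b j)) (B (σ (a i)) (b j)) (hheis _ _)
    rw [smul_mul_assoc, smul_mul_assoc, mul_smul_comm, mul_smul_comm, smul_smul, smul_smul,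
      mul_comm (d j), ← smul_sub, hpc]
  -- action of ρ(b j) ρ(σ a i) on the monomial
  have key : ∀ (i : Fin n) (j : Fin m),
      (ρ (b j) * ρ (σ (a i))) (((l.map ρ).prod) v₀)
        = B (b j) (σ (a i)) • ((l.map ρ).prod) v₀
          + ∑ k : Fin l.length,
              B (b j) (l.get k) • ((((l.set k.1 (σ (a i)))).map ρ).prod v₀) := by
    intro i j
    have h1 : ρ (σ (a i)) (((l.map ρ).prod) v₀) = ((((σ (a i) :: l)).map ρ).prod) v₀ := by
      simp [Module.End.mul_apply]
    rw [Module.End.mul_apply, h1, annih' B ρ hheis v₀ (b j) (hb0 j) (σ (a i) :: l)]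
    simp only [List.length_cons, Fin.sum_univ_succ, List.get, List.eraseIdx_cons_zero,
      List.eraseIdx_cons_succ, List.map_cons, List.prod_cons]
    congr 1
    refine Finset.sum_congr rfl fun k _ => ?_
    rw [← insert_comm_prod' ρ l k.1 k.isLt (σ (a i)) (hXcomm i)]
    simp [Module.End.mul_apply]
  -- the derivation term
  have hder : ∀ k : Fin l.length,
      (((l.set k.1 (D (l.get k))).map ρ).prod) v₀
        = ∑ i : Fin n, ∑ j : Fin m,
            ((4:ℂ) * starRingEnd ℂ (c i) * d j * B (σ (a i)) (b j) * B (b j) (l.get k)) •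
              (((l.set k.1 (σ (a i))).map ρ).prod) v₀ := by
    intro k
    obtain ⟨ψ, hψ⟩ := set_linear' ρ v₀ l k.1 k.isLt
    rw [← hψ, hD, map_sum]
    simp only [map_sum, map_smul]
    simp only [hψ]
  rw [hop]
  simp only [LinearMap.sum_apply, LinearMap.smul_apply, LinearMap.add_apply, Module.End.one_apply,
    key, hder]
  -- now everything is explicit sums; rearrange and compare scalars
  simp only [smul_add, smul_smul, Finset.smul_sum, Finset.mul_sum, Finset.sum_smul,
    Finset.sum_add_distrib]
  have h1 : (∑ x : Fin l.length, ∑ i : Fin n, ∑ j : Fin m,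
        ((4:ℂ) * starRingEnd ℂ (c i) * d j * B (σ (a i)) (b j) * B (b j) (l.get x)) •
          ((List.map (⇑ρ) (l.set (↑x) (σ (a i)))).prod v₀))
      = ∑ i : Fin n, ∑ j : Fin m, ∑ x : Fin l.length,
        ((starRingEnd ℂ (c i)) * d j * (4 * B (σ (a i)) (b j) * B (b j) (l.get x))) •
          ((List.map (⇑ρ) (l.set (↑x) (σ (a i)))).prod v₀) := by
    conv_lhs => rw [Finset.sum_comm]
    refine Finset.sum_congr rfl fun i _ => ?_
    conv_lhs => rw [Finset.sum_comm]
    refine Finset.sum_congr rfl fun j _ => Finset.sum_congr rfl fun k _ => ?_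
    congr 1
    ring
  have h2 : (∑ i : Fin n, ∑ j : Fin m,
        ((starRingEnd ℂ (c i)) * d j * (4 * B (σ (a i)) (b j) * B (b j) (σ (a i)))) •
          ((List.map (⇑ρ) l).prod v₀))
      + ∑ i : Fin n, ∑ j : Fin m,
        ((starRingEnd ℂ (c i)) * d j * (2 * (B (σ (a i)) (b j))^2)) •
          ((List.map (⇑ρ) l).prod v₀)
      = ∑ i : Fin n, ∑ j : Fin m,
        ((1/2 : ℂ) * (4 * starRingEnd ℂ (c i) * d j * B (σ (a i)) (b j) * B (b j) (σ (a i)))) •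
          ((List.map (⇑ρ) l).prod v₀) := by
    rw [← Finset.sum_add_distrib]
    refine Finset.sum_congr rfl fun i _ => ?_
    rw [← Finset.sum_add_distrib]
    refine Finset.sum_congr rfl fun j _ => ?_
    rw [← add_smul]
    congr 1
    rw [hskew (b j) (σ (a i))]
    ring
  rw [h1, ← h2]
  abel
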